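/- Let δ ∈ (0, 1] and M ≥ 0 be real numbers, let good : ℕ → Bool mark each step as good or bad, and for t ∈ ℕ let N_t denote the number of good steps among {0, …, t−1}. Let (e_k)_{k ≥ 0} and (L_k)_{k ≥ 0} be sequences of nonnegative reals such that: (i) if step k is good, then e_{k+1} ≤ (1 − δ·ξ_k)·e_k + (ξ_k²·L_k/2)·M², where ξ_k := 2/(δ·N_k + 2); (ii) if step k is bad, then e_{k+1} ≤ e_k. Then for every t with N_t ≥ 1, e_t ≤ 2·L̄_t·M²/(δ²·N_t + δ) + 4·(1 − δ)·e_0/(δ²·N_t² + δ·N_t), where L̄_t := (Σ_{k < t, k good} L_k)/N_t is the average Lipschitz estimate over good steps. -/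

import Mathlib

set_option maxHeartbeats 1000000

noncomputable def AA (δ : ℝ) (n : ℕ) : ℝ :=
  (((n : ℝ) - 2) * δ + 2) * (((n : ℝ) - 1) * δ + 2) / 2

lemma AA_nonneg (δ : ℝ) (hδ0 : 0 < δ) (hδ1 : δ ≤ 1) (n : ℕ) : 0 ≤ AA δ n := by
  have hn : (0:ℝ) ≤ n := Nat.cast_nonneg n
  unfold AA
  have h1 : (0:ℝ) ≤ ((n : ℝ) - 2) * δ + 2 := by nlinarith
  have h2 : (0:ℝ) ≤ ((n : ℝ) - 1) * δ + 2 := by nlinarith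
  positivity

lemma goodstep (δ M : ℝ) (hδ0 : 0 < δ) (hδ1 : δ ≤ 1) (hM : 0 ≤ M)
    (n : ℕ) (ep ee l : ℝ) (hee : 0 ≤ ee) (hl : 0 ≤ l)
    (h : ep ≤ (1 - δ * (2 / (δ * n + 2))) * ee + (2 / (δ * n + 2)) ^ 2 * l / 2 * M ^ 2) :
    AA δ (n + 1) * ep ≤ AA δ n * ee + l * M ^ 2 := by
  have hn : (0:ℝ) ≤ n := Nat.cast_nonneg n
  have hc : (0:ℝ) < δ * n + 2 := by nlinarith
  have hc' : (δ * (n:ℝ) + 2) ≠ 0 := ne_of_gt hc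
  have hA : 0 ≤ AA δ (n + 1) := AA_nonneg δ hδ0 hδ1 (n + 1)
  have h2 : AA δ (n + 1) * ep ≤ AA δ (n + 1) *
      ((1 - δ * (2 / (δ * n + 2))) * ee + (2 / (δ * n + 2)) ^ 2 * l / 2 * M ^ 2) :=
    mul_le_mul_of_nonneg_left h hA
  refine h2.trans ?_
  have heq : AA δ (n + 1) * (1 - δ * (2 / (δ * n + 2))) = AA δ n := by
    unfold AA
    push_cast
    field_simp
    ring
  have hle : AA δ (n + 1) * ((2 / (δ * n + 2)) ^ 2 / 2) ≤ 1 := by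
    unfold AA
    push_cast
    have : (((n:ℝ) + 1 - 2) * δ + 2) * (((n:ℝ) + 1 - 1) * δ + 2) / 2 * ((2 / (δ * (n:ℝ) + 2)) ^ 2 / 2)
        = (((n:ℝ) - 1) * δ + 2) / (δ * n + 2) := by
      field_simp
      ring
    rw [this, div_le_one hc]
    nlinarith
  have : AA δ (n + 1) *
      ((1 - δ * (2 / (δ * n + 2))) * ee + (2 / (δ * n + 2)) ^ 2 * l / 2 * M ^ 2)
      = AA δ n * ee + (AA δ (n + 1) * ((2 / (δ * n + 2)) ^ 2 / 2)) * (l * M ^ 2) := by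
    rw [← heq]; ring
  rw [this]
  have hlM : 0 ≤ l * M ^ 2 := by positivity
  nlinarith [mul_le_mul_of_nonneg_right hle hlM]

theorem stmt_13 (δ M : ℝ) (hδ : δ ∈ Set.Ioc (0 : ℝ) 1) (hM : 0 ≤ M)
    (good : ℕ → Bool) (e L : ℕ → ℝ) (he : ∀ k, 0 ≤ e k) (hL : ∀ k, 0 ≤ L k)
    (N : ℕ → ℕ) (hN : ∀ t, N t = ((Finset.range t).filter fun k => good k = true).card)
    (hgood : ∀ k, good k = true →
      e (k + 1) ≤ (1 - δ * (2 / (δ * N k + 2))) * e k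
        + (2 / (δ * N k + 2)) ^ 2 * L k / 2 * M ^ 2)
    (hbad : ∀ k, good k = false → e (k + 1) ≤ e k)
    (t : ℕ) (hNt : 1 ≤ N t) :
    e t ≤ 2 * ((∑ k ∈ (Finset.range t).filter (fun k => good k = true), L k) / N t)
            * M ^ 2 / (δ ^ 2 * N t + δ)
        + 4 * (1 - δ) * e 0 / (δ ^ 2 * (N t : ℝ) ^ 2 + δ * N t) := by
  obtain ⟨hδ0, hδ1⟩ := hδ
  -- auxiliary facts about N
  have hNstep : ∀ s, N (s + 1) = if good s = true then N s + 1 else N s := by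
    intro s
    rw [hN, hN, Finset.range_add_one, Finset.filter_insert]
    by_cases hg : good s = true
    · simp [hg, Finset.card_insert_of_notMem Finset.notMem_range_self]
    · simp [hg]
  -- key telescoping inequality
  have key : ∀ s, AA δ (N s) * e s ≤ (1 - δ) * (2 - δ) * e 0
      + M ^ 2 * ∑ k ∈ (Finset.range s).filter (fun k => good k = true), L k := by
    intro s
    induction s with
    | zero =>
      have : N 0 = 0 := by rw [hN]; simp
      rw [this]
      simp only [Finset.range_zero, Finset.filter_empty, Finset.sum_empty]
      unfold AA
      push_cast
      nlinarith [he 0]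
    | succ s ih =>
      have hsum : ∑ k ∈ (Finset.range (s+1)).filter (fun k => good k = true), L k
          = (∑ k ∈ (Finset.range s).filter (fun k => good k = true), L k)
            + if good s = true then L s else 0 := by
        rw [Finset.range_add_one, Finset.filter_insert]
        by_cases hg : good s = true
        · simp [hg, Finset.sum_insert Finset.notMem_range_self, add_comm]
        · simp [hg]
      by_cases hg : good s = true
      · have h1 := goodstep δ M hδ0 hδ1 hM (N s) (e (s+1)) (e s) (L s) (he s) (hL s)
          (hgood s hg)
        rw [hNstep s, if_pos hg, hsum, if_pos hg]
        linarith [h1, ih]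
      · have hb : good s = false := by simpa using hg
        have h1 := hbad s hb
        rw [hNstep s, if_neg hg, hsum, if_neg hg]
        have := mul_le_mul_of_nonneg_left h1 (AA_nonneg δ hδ0 hδ1 (N s))
        linarith [this, ih]
  -- final comparison
  have hkey := key t
  set S := ∑ k ∈ (Finset.range t).filter (fun k => good k = true), L k with hS
  have hSnn : 0 ≤ S := Finset.sum_nonneg fun k _ => hL k
  have hx1 : (1:ℝ) ≤ (N t : ℝ) := by exact_mod_cast hNt
  set x := (N t : ℝ) with hx
  have hxpos : 0 < x := lt_of_lt_of_le one_pos hx1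
  have hA : AA δ (N t) = ((x - 2) * δ + 2) * ((x - 1) * δ + 2) / 2 := rfl
  have hApos : 0 < AA δ (N t) := by
    rw [hA]
    have h1 : 0 < (x - 2) * δ + 2 := by nlinarith
    have h2 : 0 < (x - 1) * δ + 2 := by nlinarith
    positivity
  have hd1 : 0 < δ ^ 2 * x + δ := by nlinarith
  have hd2 : 0 < δ ^ 2 * x ^ 2 + δ * x := by nlinarith
  -- e t ≤ ((1-δ)(2-δ) e0 + M² S) / AA
  have het : e t ≤ ((1 - δ) * (2 - δ) * e 0 + M ^ 2 * S) / AA δ (N t) :=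
    (le_div_iff₀ hApos).mpr (by nlinarith [hkey])
  refine het.trans ?_
  have hT : 2 * (S / x) * M ^ 2 / (δ ^ 2 * x + δ) + 4 * (1 - δ) * e 0 / (δ ^ 2 * x ^ 2 + δ * x)
      = (2 * S * M ^ 2 + 4 * (1 - δ) * e 0) / (δ ^ 2 * x ^ 2 + δ * x) := by
    have hδne : δ ≠ 0 := ne_of_gt hδ0
    have h1 : δ ^ 2 * x + δ ≠ 0 := ne_of_gt hd1
    have h2 : δ ^ 2 * x ^ 2 + δ * x ≠ 0 := ne_of_gt hd2
    field_simp
  rw [hT, div_le_div_iff₀ hApos hd2]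
  have hP1 : δ ^ 2 * x ^ 2 + δ * x ≤ ((x - 2) * δ + 2) * ((x - 1) * δ + 2) := by
    nlinarith [mul_nonneg (sub_nonneg.2 hδ1) hxpos.le, mul_nonneg (sub_nonneg.2 hδ1) (sub_nonneg.2 hδ1)]
  have hP2 : (2 - δ) * (δ ^ 2 * x ^ 2 + δ * x) ≤ 2 * (((x - 2) * δ + 2) * ((x - 1) * δ + 2)) := by
    nlinarith [hd2]
  rw [hA]
  nlinarith [mul_le_mul_of_nonneg_left hP1 (mul_nonneg (sq_nonneg M) hSnn),
    mul_le_mul_of_nonneg_left hP2 (mul_nonneg (sub_nonneg.2 hδ1) (he 0))]
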